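/- arXiv:2602.16283 — 2 statements merged into one kernel-verified Lean document; each statement's English description precedes it below -/
import Mathlib

section
/- (Orthogonality of the Gumbel reparametrisation with transformed location parameter μ̃(ν,σ) = (1−γ)σ + C₁(ν).) For all μ ∈ ℝ and σ > 0, ∫_ℝ s_μ(x;μ,σ) · ((1−γ)·s_μ(x;μ,σ) + s_σ(x;μ,σ)) · f(x;μ,σ) dx = 0, where γ is the Euler–Mascheroni constant. Equivalently, the Fisher cross-information between the new parameters ν and σ vanishes, since the score in ν is C₁'(ν)·s_μ and the score in σ under the reparametrisation is (1−γ)·s_μ + s_σ by the chain rule. -/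
open MeasureTheory Real

/-- Gumbel(μ,σ) density. -/
noncomputable def gumbelPdf (μ σ x : ℝ) : ℝ :=
  (1 / σ) * Real.exp (-((x - μ) / σ)) * Real.exp (-Real.exp (-((x - μ) / σ)))

/-- Score of the Gumbel distribution with respect to the location parameter μ. -/
noncomputable def gumbelScoreMu (μ σ x : ℝ) : ℝ :=
  (1 / σ) * (1 - Real.exp (-((x - μ) / σ)))

/-- Score of the Gumbel distribution with respect to the scale parameter σ. -/
noncomputable def gumbelScoreSigma (μ σ x : ℝ) : ℝ :=
  ((x - μ) / σ ^ 2) * (1 - Real.exp (-((x - μ) / σ))) - 1 / σ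

section GumbelAux

open Set Filter Complex Asymptotics
open scoped Topology


-- integrability: complex
lemma gumbelAux_mellinConv (n : ℕ) :
    MellinConvergent (fun t : ℝ => Real.log t • ((Real.exp (-t) : ℝ) : ℂ)) ((n : ℂ) + 1) := by
  have := (mellin_hasDerivAt_of_isBigO_rpow (E := ℂ) (a := (n : ℝ) + 2) (b := 0)
    (f := fun t : ℝ => ((Real.exp (-t) : ℝ) : ℂ)) (s := (n : ℂ) + 1) ?_ ?_ ?_ ?_ ?_).1
  · exact this
  · refine (Continuous.continuousOn ?_).locallyIntegrableOn measurableSet_Ioi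
    exact Complex.continuous_ofReal.comp (Real.continuous_exp.comp continuous_neg)
  · rw [← isBigO_norm_left]
    simp_rw [Complex.norm_real, isBigO_norm_left]
    simpa only [neg_one_mul] using (isLittleO_exp_neg_mul_rpow_atTop zero_lt_one _).isBigO
  · simp
  · simp_rw [neg_zero, Real.rpow_zero]
    refine isBigO_const_of_tendsto (?_ : Tendsto _ _ (𝓝 (1 : ℂ))) one_ne_zero
    rw [(by simp : (1 : ℂ) = Real.exp (-0))]
    exact (Complex.continuous_ofReal.comp (Real.continuous_exp.comp continuous_neg)).continuousWithinAt
  · simp; positivity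

lemma gumbelAux_integrableOn_E (n : ℕ) :
    IntegrableOn (fun t : ℝ => t ^ n * Real.exp (-t)) (Ioi 0) := by
  have h := Real.GammaIntegral_convergent (s := (n : ℝ) + 1) (by positivity)
  refine (h.congr_fun (fun t ht => ?_) measurableSet_Ioi)
  simp only [add_sub_cancel_right, Real.rpow_natCast]
  ring

lemma gumbelAux_E_val (n : ℕ) : (∫ t in Ioi (0:ℝ), t ^ n * Real.exp (-t)) = Nat.factorial n := by
  have h := Real.Gamma_eq_integral (s := (n : ℝ) + 1) (by positivity)
  rw [Real.Gamma_nat_eq_factorial] at h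
  rw [h]
  refine setIntegral_congr_fun measurableSet_Ioi (fun t ht => ?_)
  simp only [add_sub_cancel_right, Real.rpow_natCast]
  ring

lemma gumbelAux_integrableOn_L (n : ℕ) :
    IntegrableOn (fun t : ℝ => t ^ n * Real.log t * Real.exp (-t)) (Ioi 0) := by
  have h : IntegrableOn
      (fun t : ℝ => (t : ℂ) ^ (((n : ℂ) + 1) - 1) • (Real.log t • ((Real.exp (-t) : ℝ) : ℂ)))
      (Ioi 0) := gumbelAux_mellinConv n
  have h2 : IntegrableOn (fun t : ℝ => ((t ^ n * Real.log t * Real.exp (-t) : ℝ) : ℂ))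
      (Ioi 0) := by
    refine h.congr_fun (fun t ht => ?_) measurableSet_Ioi
    simp only [add_sub_cancel_right, Complex.cpow_natCast, smul_eq_mul, Complex.real_smul]
    push_cast
    ring
  have := h2.re
  simpa only [RCLike.re_to_complex, Complex.ofReal_re, IntegrableOn] using this

lemma gumbelAux_L_val (n : ℕ) : (∫ t in Ioi (0:ℝ), t ^ n * Real.log t * Real.exp (-t))
    = Nat.factorial n * (-Real.eulerMascheroniConstant + harmonic n) := by
  have hd1 : HasDerivAt Complex.GammaIntegral
      (∫ t : ℝ in Ioi 0, (t : ℂ) ^ (((n : ℂ) + 1) - 1) * (Real.log t * Real.exp (-t)))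
      ((n : ℂ) + 1) :=
    Complex.hasDerivAt_GammaIntegral (by simp; positivity)
  have heq : Complex.Gamma =ᶠ[𝓝 ((n : ℂ) + 1)] Complex.GammaIntegral := by
    have hopen : IsOpen {s : ℂ | 0 < s.re} := isOpen_lt continuous_const Complex.continuous_re
    filter_upwards [hopen.mem_nhds (by simp; positivity)] with s hs
    exact Complex.Gamma_eq_integral hs
  have hd2 : HasDerivAt Complex.Gamma
      (∫ t : ℝ in Ioi 0, (t : ℂ) ^ (((n : ℂ) + 1) - 1) * (Real.log t * Real.exp (-t)))
      ((n : ℂ) + 1) := hd1.congr_of_eventuallyEq heq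
  have huniq := hd2.unique (Complex.hasDerivAt_Gamma_nat n)
  have hre : (∫ t : ℝ in Ioi 0, (t : ℂ) ^ (((n : ℂ) + 1) - 1) * (Real.log t * Real.exp (-t)))
      = ((∫ t : ℝ in Ioi 0, t ^ n * Real.log t * Real.exp (-t) : ℝ) : ℂ) := by
    refine (setIntegral_congr_fun measurableSet_Ioi (fun t ht => ?_)).trans integral_ofReal
    simp only [add_sub_cancel_right, Complex.cpow_natCast, Complex.ofReal_exp,
      Complex.ofReal_neg, Complex.ofReal_mul, Complex.ofReal_pow]
    norm_cast
    exact congrArg _ (by simp [mul_assoc])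
  rw [hre] at huniq
  exact_mod_cast huniq

lemma gumbelAux_key_integral :
    (∫ u in Ioi (0:ℝ), (1 - u) * ((1 - Real.eulerMascheroniConstant) * (1 - u)
      - Real.log u * (1 - u) - 1) * Real.exp (-u)) = 0 := by
  set c := Real.eulerMascheroniConstant with hc
  have h0 : Integrable (fun u : ℝ => (-c) * (u ^ 0 * Real.exp (-u)))
      (volume.restrict (Ioi 0)) := (gumbelAux_integrableOn_E 0).const_mul _
  have h1 : Integrable (fun u : ℝ => (2*c-1) * (u ^ 1 * Real.exp (-u)))
      (volume.restrict (Ioi 0)) := (gumbelAux_integrableOn_E 1).const_mul _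
  have h2 : Integrable (fun u : ℝ => (1-c) * (u ^ 2 * Real.exp (-u)))
      (volume.restrict (Ioi 0)) := (gumbelAux_integrableOn_E 2).const_mul _
  have h3 : Integrable (fun u : ℝ => (-1) * (u ^ 0 * Real.log u * Real.exp (-u)))
      (volume.restrict (Ioi 0)) := (gumbelAux_integrableOn_L 0).const_mul _
  have h4 : Integrable (fun u : ℝ => (2:ℝ) * (u ^ 1 * Real.log u * Real.exp (-u)))
      (volume.restrict (Ioi 0)) := (gumbelAux_integrableOn_L 1).const_mul _
  have h5 : Integrable (fun u : ℝ => (-1) * (u ^ 2 * Real.log u * Real.exp (-u)))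
      (volume.restrict (Ioi 0)) := (gumbelAux_integrableOn_L 2).const_mul _
  have hfun : (fun u : ℝ => (1 - u) * ((1 - c) * (1 - u) - Real.log u * (1 - u) - 1)
        * Real.exp (-u))
      = fun u : ℝ => (-c) * (u ^ 0 * Real.exp (-u))
        + ((2*c-1) * (u ^ 1 * Real.exp (-u))
        + ((1-c) * (u ^ 2 * Real.exp (-u))
        + ((-1) * (u ^ 0 * Real.log u * Real.exp (-u))
        + ((2:ℝ) * (u ^ 1 * Real.log u * Real.exp (-u))
        + (-1) * (u ^ 2 * Real.log u * Real.exp (-u)))))) := by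
    funext u; ring
  have s4 : Integrable (fun u : ℝ => (2:ℝ) * (u ^ 1 * Real.log u * Real.exp (-u))
      + (-1) * (u ^ 2 * Real.log u * Real.exp (-u))) (volume.restrict (Ioi 0)) := h4.add h5
  have s3 : Integrable (fun u : ℝ => (-1) * (u ^ 0 * Real.log u * Real.exp (-u))
      + ((2:ℝ) * (u ^ 1 * Real.log u * Real.exp (-u))
      + (-1) * (u ^ 2 * Real.log u * Real.exp (-u)))) (volume.restrict (Ioi 0)) := h3.add s4
  have s2 : Integrable (fun u : ℝ => (1-c) * (u ^ 2 * Real.exp (-u))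
      + ((-1) * (u ^ 0 * Real.log u * Real.exp (-u))
      + ((2:ℝ) * (u ^ 1 * Real.log u * Real.exp (-u))
      + (-1) * (u ^ 2 * Real.log u * Real.exp (-u))))) (volume.restrict (Ioi 0)) := h2.add s3
  have s1 : Integrable (fun u : ℝ => (2*c-1) * (u ^ 1 * Real.exp (-u))
      + ((1-c) * (u ^ 2 * Real.exp (-u))
      + ((-1) * (u ^ 0 * Real.log u * Real.exp (-u))
      + ((2:ℝ) * (u ^ 1 * Real.log u * Real.exp (-u))
      + (-1) * (u ^ 2 * Real.log u * Real.exp (-u)))))) (volume.restrict (Ioi 0)) := h1.add s2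
  rw [hfun, integral_add h0 s1, integral_add h1 s2, integral_add h2 s3, integral_add h3 s4,
    integral_add h4 h5,
    integral_const_mul, integral_const_mul, integral_const_mul, integral_const_mul,
    integral_const_mul, integral_const_mul,
    gumbelAux_E_val 0, gumbelAux_E_val 1, gumbelAux_E_val 2, gumbelAux_L_val 0, gumbelAux_L_val 1, gumbelAux_L_val 2]
  norm_num [harmonic_succ, Nat.factorial]
  ring

theorem gumbel_orthogonal_location_reparam (μ σ : ℝ) (hσ : 0 < σ) :
    ∫ x : ℝ, gumbelScoreMu μ σ x *
        ((1 - Real.eulerMascheroniConstant) * gumbelScoreMu μ σ x + gumbelScoreSigma μ σ x) *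
        gumbelPdf μ σ x = 0 := by
  set c := Real.eulerMascheroniConstant with hc
  set G : ℝ → ℝ := fun u => (1/σ^2) * ((1 - u) * ((1 - c) * (1 - u)
      - Real.log u * (1 - u) - 1) * Real.exp (-u)) with hG
  set φ : ℝ → ℝ := fun x => Real.exp (-((x - μ)/σ)) with hφ
  have hφd : ∀ x ∈ (Set.univ : Set ℝ), HasDerivWithinAt φ (-(φ x) / σ) Set.univ x := by
    intro x _
    have h1 : HasDerivAt (fun x : ℝ => -((x - μ)/σ)) (-(1/σ)) x := by
      exact (((hasDerivAt_id x).sub_const μ).div_const σ).neg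
    have h2 := h1.exp
    refine (h2.congr_deriv ?_).hasDerivWithinAt
    rw [hφ]
    field_simp
  have hinj : Set.InjOn φ Set.univ := by
    intro a _ b _ h
    have h2 : -((a - μ)/σ) = -((b - μ)/σ) := Real.exp_injective h
    field_simp at h2
    linarith
  have himg : φ '' Set.univ = Ioi 0 := by
    rw [Set.image_univ]
    ext u
    simp only [Set.mem_range, Set.mem_Ioi]
    constructor
    · rintro ⟨x, rfl⟩; exact Real.exp_pos _
    · intro hu
      refine ⟨μ - σ * Real.log u, ?_⟩
      show Real.exp (-((μ - σ * Real.log u - μ)/σ)) = u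
      have h3 : -((μ - σ * Real.log u - μ)/σ) = Real.log u := by field_simp; ring
      rw [h3, Real.exp_log hu]
  have hchg := integral_image_eq_integral_abs_deriv_smul MeasurableSet.univ hφd hinj G
  rw [himg] at hchg
  have hmain : (∫ x : ℝ, gumbelScoreMu μ σ x *
        ((1 - c) * gumbelScoreMu μ σ x + gumbelScoreSigma μ σ x) * gumbelPdf μ σ x)
      = ∫ u in Ioi (0:ℝ), G u := by
    rw [hchg, Measure.restrict_univ]
    refine integral_congr_ae (Eventually.of_forall fun x => ?_)
    have habs : |(-(φ x) / σ)| = φ x / σ := by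
      rw [abs_div, abs_neg, abs_of_pos (Real.exp_pos _), abs_of_pos hσ]
    show gumbelScoreMu μ σ x * ((1 - c) * gumbelScoreMu μ σ x + gumbelScoreSigma μ σ x) *
        gumbelPdf μ σ x = |(-(φ x) / σ)| • G (φ x)
    rw [smul_eq_mul, habs, hG, hφ]
    simp only [Real.log_exp]
    simp only [gumbelScoreMu, gumbelScoreSigma, gumbelPdf]
    field_simp
    ring
  rw [hmain, hG]
  simp only
  rw [integral_const_mul, gumbelAux_key_integral, mul_zero]

end GumbelAux
end

section
/- Let σ > 0 and ξ > 0. Then the Fisher information cross entry i_{σξ} of the GP(σ,ξ) distribution satisfies ∫_0^∞ s_σ(x;σ,ξ) · s_ξ(x;σ,ξ) · f(x;σ,ξ) dx = 1/(σ·(1+ξ)(1+2ξ)). -/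
open MeasureTheory Real

/-- Density of the two-parameter Generalised Pareto distribution GP(σ,ξ), for x > 0. -/
noncomputable def gpPdf (σ ξ x : ℝ) : ℝ :=
  (1 / σ) * (1 + ξ * x / σ) ^ (-1 - 1 / ξ)

/-- Score of the GP distribution with respect to the scale parameter σ. -/
noncomputable def gpScoreSigma (σ ξ x : ℝ) : ℝ :=
  -1 / σ + (1 + ξ) * x / (σ * (σ + ξ * x))

/-- Score of the GP distribution with respect to the shape parameter ξ. -/
noncomputable def gpScoreXi (σ ξ x : ℝ) : ℝ :=
  (1 / ξ ^ 2) * Real.log (1 + ξ * x / σ) - (1 + 1 / ξ) * x / (σ + ξ * x)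

/-- Antiderivative of the Fisher cross-entry integrand. -/
noncomputable def gpF (σ ξ x : ℝ) : ℝ :=
  (1/(σ*ξ^3)) * ( -((1+ξ*x/σ) ^ (-(1/ξ))) * Real.log (1+ξ*x/σ)
    + (1+ξ*x/σ) ^ (-(1/ξ))
    + (1+ξ*x/σ) ^ (-(1/ξ) - 1) * Real.log (1+ξ*x/σ)
    + (-(ξ^2+2*ξ+2)/(1+ξ)) * (1+ξ*x/σ) ^ (-(1/ξ) - 1)
    + ((1+ξ)^2/(1+2*ξ)) * (1+ξ*x/σ) ^ (-(1/ξ) - 1 - 1) )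

lemma gpF_hasDeriv (σ ξ : ℝ) (hσ : 0 < σ) (hξ : 0 < ξ) (x : ℝ) (hx : 0 ≤ x) :
    HasDerivAt (gpF σ ξ) (gpScoreSigma σ ξ x * gpScoreXi σ ξ x * gpPdf σ ξ x) x := by
  have hy0 : (0:ℝ) < 1 + ξ*x/σ := by positivity
  have hy : HasDerivAt (fun x : ℝ => 1+ξ*x/σ) (ξ/σ) x := by
    simpa using (((hasDerivAt_id x).const_mul ξ).div_const σ).const_add 1
  have hL : HasDerivAt (fun x => Real.log (1+ξ*x/σ)) (ξ/σ / (1+ξ*x/σ)) x := hy.log hy0.ne'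
  have hP : HasDerivAt (fun x : ℝ => (1+ξ*x/σ) ^ (-(1/ξ)))
      (ξ/σ * (-(1/ξ)) * (1+ξ*x/σ) ^ (-(1/ξ)-1)) x := hy.rpow_const (Or.inl hy0.ne')
  have hP1 : HasDerivAt (fun x : ℝ => (1+ξ*x/σ) ^ (-(1/ξ)-1))
      (ξ/σ * (-(1/ξ)-1) * (1+ξ*x/σ) ^ (-(1/ξ)-1-1)) x := hy.rpow_const (Or.inl hy0.ne')
  have hP2 : HasDerivAt (fun x : ℝ => (1+ξ*x/σ) ^ (-(1/ξ)-1-1))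
      (ξ/σ * (-(1/ξ)-1-1) * (1+ξ*x/σ) ^ (-(1/ξ)-1-1-1)) x := hy.rpow_const (Or.inl hy0.ne')
  have hD := ((((((hP.neg.mul hL).add hP).add (hP1.mul hL)).add
      (hP1.const_mul (-(ξ^2+2*ξ+2)/(1+ξ)))).add
      (hP2.const_mul ((1+ξ)^2/(1+2*ξ)))).const_mul (1/(σ*ξ^3)))
  unfold gpF
  refine hD.congr_deriv ?_
  have hsx : 0 < σ + ξ*x := by positivity
  have h1ξ : (0:ℝ) < 1 + ξ := by linarith
  have h2ξ : (0:ℝ) < 1 + 2*ξ := by linarith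
  have e1 : (1+ξ*x/σ) ^ (-(1/ξ)-1) = (1+ξ*x/σ) ^ (-(1/ξ)) / (1+ξ*x/σ) := by
    rw [rpow_sub hy0, rpow_one]
  have e2 : (1+ξ*x/σ) ^ (-(1/ξ)-1-1)
      = (1+ξ*x/σ) ^ (-(1/ξ)) / (1+ξ*x/σ) / (1+ξ*x/σ) := by
    rw [rpow_sub hy0, rpow_one, e1]
  have e3 : (1+ξ*x/σ) ^ (-(1/ξ)-1-1-1)
      = (1+ξ*x/σ) ^ (-(1/ξ)) / (1+ξ*x/σ) / (1+ξ*x/σ) / (1+ξ*x/σ) := by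
    rw [rpow_sub hy0, rpow_one, e2]
  have e0 : (1+ξ*x/σ) ^ (-1-1/ξ : ℝ) = (1+ξ*x/σ) ^ (-(1/ξ)) / (1+ξ*x/σ) := by
    rw [show (-1-1/ξ:ℝ) = -(1/ξ)-1 by ring, rpow_sub hy0, rpow_one]
  unfold gpScoreSigma gpScoreXi gpPdf
  simp only [Pi.neg_apply]
  rw [e0, e3, e2, e1]
  field_simp
  ring

lemma gp_tendsto_base (σ ξ : ℝ) (hσ : 0 < σ) (hξ : 0 < ξ) :
    Filter.Tendsto (fun x : ℝ => 1 + ξ*x/σ) Filter.atTop Filter.atTop := by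
  apply Filter.tendsto_atTop_add_const_left
  have : (fun x : ℝ => ξ*x/σ) = fun x : ℝ => (ξ/σ) * x := by funext x; ring
  rw [this]
  exact Filter.Tendsto.const_mul_atTop (by positivity) Filter.tendsto_id

lemma gp_tendsto_rpow_neg_mul_log (p : ℝ) (hp : 0 < p) :
    Filter.Tendsto (fun z : ℝ => z ^ (-p) * Real.log z) Filter.atTop (nhds 0) := by
  apply ((isLittleO_log_rpow_atTop hp).tendsto_div_nhds_zero).congr'
  filter_upwards [Filter.eventually_gt_atTop (0:ℝ)] with z hz
  rw [Real.rpow_neg hz.le]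
  ring

lemma gpIntegrable_aux (σ ξ p : ℝ) (hσ : 0 < σ) (hξ : 0 < ξ) (hp : 0 < p) :
    IntegrableOn (fun x : ℝ => (1+ξ*x/σ) ^ (-1-p)) (Set.Ioi 0) := by
  apply integrableOn_Ioi_deriv_of_nonneg'
      (g := fun x : ℝ => (-(σ/(ξ*p))) * (1+ξ*x/σ) ^ (-p)) (l := 0)
  · intro x hx
    have hx0 : (0:ℝ) ≤ x := hx
    have hy0 : (0:ℝ) < 1 + ξ*x/σ := by positivity
    have hy : HasDerivAt (fun x : ℝ => 1+ξ*x/σ) (ξ/σ) x := by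
      simpa using (((hasDerivAt_id x).const_mul ξ).div_const σ).const_add 1
    have hP : HasDerivAt (fun x : ℝ => (1+ξ*x/σ) ^ (-p))
        (ξ/σ * (-p) * (1+ξ*x/σ) ^ (-p-1)) x := hy.rpow_const (Or.inl hy0.ne')
    have := hP.const_mul (-(σ/(ξ*p)))
    refine this.congr_deriv ?_
    rw [show (-1-p:ℝ) = -p-1 by ring]
    field_simp
  · intro x hx
    have hx0 : (0:ℝ) ≤ x := le_of_lt hx
    have hy0 : (0:ℝ) < 1 + ξ*x/σ := by positivity
    positivity
  · have h0 : Filter.Tendsto (fun x : ℝ => (1+ξ*x/σ) ^ (-p)) Filter.atTop (nhds 0) :=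
      (tendsto_rpow_neg_atTop hp).comp (gp_tendsto_base σ ξ hσ hξ)
    simpa using h0.const_mul (-(σ/(ξ*p)))

lemma gpF_tendsto (σ ξ : ℝ) (hσ : 0 < σ) (hξ : 0 < ξ) :
    Filter.Tendsto (gpF σ ξ) Filter.atTop (nhds 0) := by
  have hb := gp_tendsto_base σ ξ hσ hξ
  have h1ξ : (0:ℝ) < 1/ξ := by positivity
  have l1 : Filter.Tendsto (fun x : ℝ => -((1+ξ*x/σ) ^ (-(1/ξ))) * Real.log (1+ξ*x/σ))
      Filter.atTop (nhds 0) := by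
    have := (gp_tendsto_rpow_neg_mul_log (1/ξ) h1ξ).comp hb
    simpa [Function.comp, neg_mul] using this.neg
  have l2 : Filter.Tendsto (fun x : ℝ => (1+ξ*x/σ) ^ (-(1/ξ))) Filter.atTop (nhds 0) :=
    (tendsto_rpow_neg_atTop h1ξ).comp hb
  have l3' : Filter.Tendsto (fun x : ℝ => (1+ξ*x/σ) ^ (-(1/ξ+1)) * Real.log (1+ξ*x/σ))
      Filter.atTop (nhds 0) := (gp_tendsto_rpow_neg_mul_log (1/ξ+1) (by positivity)).comp hb
  have l3 : Filter.Tendsto (fun x : ℝ => (1+ξ*x/σ) ^ (-(1/ξ)-1) * Real.log (1+ξ*x/σ))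
      Filter.atTop (nhds 0) := by
    rw [show (-(1/ξ)-1 : ℝ) = -(1/ξ+1) by ring]; exact l3'
  have l4' : Filter.Tendsto (fun x : ℝ => (1+ξ*x/σ) ^ (-(1/ξ)-1)) Filter.atTop (nhds 0) := by
    rw [show (-(1/ξ)-1 : ℝ) = -(1/ξ+1) by ring]
    exact (tendsto_rpow_neg_atTop (by positivity)).comp hb
  have l5' : Filter.Tendsto (fun x : ℝ => (1+ξ*x/σ) ^ (-(1/ξ)-1-1)) Filter.atTop (nhds 0) := by
    rw [show (-(1/ξ)-1-1 : ℝ) = -(1/ξ+1+1) by ring]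
    exact (tendsto_rpow_neg_atTop (by positivity)).comp hb
  have l4 := l4'.const_mul (-(ξ^2+2*ξ+2)/(1+ξ))
  have l5 := l5'.const_mul ((1+ξ)^2/(1+2*ξ))
  have := (((((l1.add l2).add l3).add l4).add l5).const_mul (1/(σ*ξ^3)))
  unfold gpF
  simpa using this

lemma gpIntegrand_integrable (σ ξ : ℝ) (hσ : 0 < σ) (hξ : 0 < ξ) :
    IntegrableOn (fun x => gpScoreSigma σ ξ x * gpScoreXi σ ξ x * gpPdf σ ξ x)
      (Set.Ioi (0:ℝ)) := by
  have hq : (0:ℝ) < 1/(2*ξ) := by positivity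
  have hB := ((gpIntegrable_aux σ ξ (1/(2*ξ)) hσ hξ hq).const_mul
    ((1/σ + (1+ξ)/(σ*ξ)) * (2/ξ + (1+1/ξ)/ξ) * (1/σ)))
  apply Integrable.mono' hB
  · refine (measurable_deriv (gpF σ ξ)).aestronglyMeasurable.congr ?_
    rw [Filter.EventuallyEq, ae_restrict_iff' measurableSet_Ioi]
    exact Filter.Eventually.of_forall fun x hx => (gpF_hasDeriv σ ξ hσ hξ x (le_of_lt hx)).deriv
  · rw [ae_restrict_iff' measurableSet_Ioi]
    refine Filter.Eventually.of_forall fun x hx => ?_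
    have hx0 : (0:ℝ) < x := hx
    have hy0 : (0:ℝ) < 1 + ξ*x/σ := by positivity
    have hy1 : (1:ℝ) ≤ 1 + ξ*x/σ := by
      have : (0:ℝ) ≤ ξ*x/σ := by positivity
      linarith
    have hsx : (0:ℝ) < σ + ξ*x := by positivity
    have hL0 : (0:ℝ) ≤ Real.log (1+ξ*x/σ) := Real.log_nonneg hy1
    have hyq1 : (1:ℝ) ≤ (1+ξ*x/σ) ^ (1/(2*ξ)) := Real.one_le_rpow hy1 (by positivity)
    -- bound on the sigma-score
    have b1 : |gpScoreSigma σ ξ x| ≤ 1/σ + (1+ξ)/(σ*ξ) := by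
      have ht0 : (0:ℝ) ≤ (1+ξ)*x/(σ*(σ+ξ*x)) := by positivity
      have ht1 : (1+ξ)*x/(σ*(σ+ξ*x)) ≤ (1+ξ)/(σ*ξ) := by
        rw [div_le_div_iff₀ (by positivity) (by positivity)]
        nlinarith [mul_pos (mul_pos (show (0:ℝ) < 1+ξ by linarith) hσ) hσ]
      have h1σ : (0:ℝ) < 1/σ := by positivity
      have hp2 : (0:ℝ) ≤ (1+ξ)/(σ*ξ) := by positivity
      unfold gpScoreSigma
      rw [show -1/σ = -(1/σ) by ring, abs_le]
      constructor <;> linarith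
    -- bound on the xi-score
    have b2 : |gpScoreXi σ ξ x| ≤ (2/ξ + (1+1/ξ)/ξ) * (1+ξ*x/σ) ^ (1/(2*ξ)) := by
      have habs : |gpScoreXi σ ξ x| ≤ (1/ξ^2) * Real.log (1+ξ*x/σ)
          + (1+1/ξ)*x/(σ+ξ*x) := by
        unfold gpScoreXi
        refine (abs_sub _ _).trans ?_
        rw [abs_of_nonneg (by positivity), abs_of_nonneg (by positivity)]
      have h1 := Real.log_le_sub_one_of_pos (Real.rpow_pos_of_pos hy0 (1/(2*ξ)))
      rw [Real.log_rpow hy0] at h1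
      have h2 := mul_le_mul_of_nonneg_left h1 (le_of_lt (show (0:ℝ) < 2/ξ by positivity))
      have e : (2/ξ) * (1/(2*ξ) * Real.log (1+ξ*x/σ)) = (1/ξ^2) * Real.log (1+ξ*x/σ) := by
        field_simp
      rw [e] at h2
      have h2ξ : (0:ℝ) ≤ 2/ξ := by positivity
      have hb1 : (1+1/ξ)*x/(σ+ξ*x) ≤ (1+1/ξ)/ξ := by
        rw [div_le_div_iff₀ (by positivity) hξ]
        have h1ξ' : (0:ℝ) < 1+1/ξ := by positivity
        nlinarith [mul_pos h1ξ' hσ]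
      have hb2 : (1+1/ξ)/ξ ≤ (1+1/ξ)/ξ * (1+ξ*x/σ) ^ (1/(2*ξ)) :=
        le_mul_of_one_le_right (by positivity) hyq1
      have expand : (2/ξ + (1+1/ξ)/ξ) * (1+ξ*x/σ) ^ (1/(2*ξ))
          = (2/ξ) * (1+ξ*x/σ) ^ (1/(2*ξ)) + (1+1/ξ)/ξ * (1+ξ*x/σ) ^ (1/(2*ξ)) := by ring
      rw [expand]
      have h2' : (1/ξ^2) * Real.log (1+ξ*x/σ) ≤ (2/ξ) * (1+ξ*x/σ) ^ (1/(2*ξ)) := by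
        have : (2/ξ) * ((1+ξ*x/σ) ^ (1/(2*ξ)) - 1) ≤ (2/ξ) * (1+ξ*x/σ) ^ (1/(2*ξ)) := by
          nlinarith
        linarith
      linarith [habs, hb1.trans hb2]
    have b3 : |gpPdf σ ξ x| = (1/σ) * (1+ξ*x/σ) ^ (-1-1/ξ) := by
      unfold gpPdf
      exact abs_of_nonneg (by positivity)
    rw [Real.norm_eq_abs, abs_mul, abs_mul]
    calc |gpScoreSigma σ ξ x| * |gpScoreXi σ ξ x| * |gpPdf σ ξ x|
        ≤ (1/σ + (1+ξ)/(σ*ξ)) * ((2/ξ + (1+1/ξ)/ξ) * (1+ξ*x/σ) ^ (1/(2*ξ)))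
          * ((1/σ) * (1+ξ*x/σ) ^ (-1-1/ξ)) := by
          refine mul_le_mul (mul_le_mul b1 b2 (abs_nonneg _) (by positivity))
            (le_of_eq b3) (abs_nonneg _) (by positivity)
      _ = (1/σ + (1+ξ)/(σ*ξ)) * (2/ξ + (1+1/ξ)/ξ) * (1/σ)
          * ((1+ξ*x/σ) ^ (1/(2*ξ)) * (1+ξ*x/σ) ^ (-1-1/ξ)) := by ring
      _ = (1/σ + (1+ξ)/(σ*ξ)) * (2/ξ + (1+1/ξ)/ξ) * (1/σ)
          * (1+ξ*x/σ) ^ (-1-1/(2*ξ)) := by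
          rw [← Real.rpow_add hy0,
            show (1/(2*ξ) + (-1-1/ξ) : ℝ) = -1-1/(2*ξ) by field_simp; ring]


theorem gp_fisher_sigma_xi (σ ξ : ℝ) (hσ : 0 < σ) (hξ : 0 < ξ) :
    ∫ x in Set.Ioi (0 : ℝ), gpScoreSigma σ ξ x * gpScoreXi σ ξ x * gpPdf σ ξ x
      = 1 / (σ * (1 + ξ) * (1 + 2 * ξ)) := by
  have key := integral_Ioi_of_hasDerivAt_of_tendsto
    (f := gpF σ ξ) (f' := fun x => gpScoreSigma σ ξ x * gpScoreXi σ ξ x * gpPdf σ ξ x)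
    (m := 0)
    ((gpF_hasDeriv σ ξ hσ hξ 0 le_rfl).continuousAt.continuousWithinAt)
    (fun x hx => gpF_hasDeriv σ ξ hσ hξ x (le_of_lt hx))
    (gpIntegrand_integrable σ ξ hσ hξ) (gpF_tendsto σ ξ hσ hξ)
  rw [key]
  unfold gpF
  have h1 : (1:ℝ) + ξ ≠ 0 := by positivity
  have h2 : (1:ℝ) + 2*ξ ≠ 0 := by positivity
  simp only [mul_zero, zero_div, add_zero, Real.one_rpow, Real.log_one]
  field_simp
  ring
end
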